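/- The field L̃ = ℚ(√2, 3^{1/4}, i), viewed as an intermediate field of ℂ/ℚ, is a Galois extension of ℚ of degree 16: IsGalois ℚ L̃ holds and the finrank of L̃ over ℚ equals 16. -/

import Mathlib

open Polynomial IntermediateField

noncomputable section StmtAux

local notation "α" => ((((3:ℝ) ^ ((1:ℝ)/4) : ℝ)) : ℂ)

private lemma halpha4 : α ^ 4 = 3 := by
  rw [← Complex.ofReal_pow, show ((3:ℝ) ^ ((1:ℝ)/4)) ^ (4:ℕ) = 3 by
    rw [← Real.rpow_natCast ((3:ℝ) ^ ((1:ℝ)/4)) 4, ← Real.rpow_mul (by norm_num)]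
    norm_num]
  norm_num

private lemma sqrt2_sq : ((Real.sqrt 2 : ℝ) : ℂ) ^ 2 = 2 := by
  rw [← Complex.ofReal_pow, Real.sq_sqrt (by norm_num)]
  norm_num

private lemma irrZ4 : Irreducible (X^4 - C (3:ℤ)) := by
  apply Polynomial.irreducible_of_eisenstein_criterion
    (P := Ideal.span {(3:ℤ)})
  · exact (Ideal.span_singleton_prime (by norm_num)).mpr Int.prime_three
  · rw [Polynomial.leadingCoeff_X_pow_sub_C (by norm_num), Ideal.mem_span_singleton]
    norm_num
  · intro n hn
    rw [Polynomial.degree_X_pow_sub_C (by norm_num)] at hn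
    have hn4 : n < 4 := by exact_mod_cast hn
    rw [Ideal.mem_span_singleton]
    interval_cases n <;> simp [coeff_X_pow]
  · rw [Polynomial.degree_X_pow_sub_C (by norm_num)]; norm_num
  · rw [Ideal.span_singleton_pow, Ideal.mem_span_singleton]
    simp [coeff_X_pow]
  · exact (Polynomial.monic_X_pow_sub_C _ (by norm_num)).isPrimitive

private lemma irrQ4 : Irreducible (X^4 - C (3:ℚ)) := by
  have := (Polynomial.Monic.irreducible_iff_irreducible_map_fraction_map
    (K := ℚ) (Polynomial.monic_X_pow_sub_C (3:ℤ) (n := 4) (by norm_num))).mp irrZ4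
  simpa [Polynomial.map_sub, Polynomial.map_pow, C_ofNat] using this

private lemma minpoly_alpha : minpoly ℚ α = X^4 - C (3:ℚ) := by
  refine (minpoly.eq_of_irreducible_of_monic irrQ4 ?_
    (Polynomial.monic_X_pow_sub_C _ (by norm_num))).symm
  simp only [map_sub, map_pow, aeval_X, aeval_C]
  rw [sub_eq_zero, show (algebraMap ℚ ℂ) 3 = (3:ℂ) by norm_num]
  exact halpha4

private lemma alpha_int : IsIntegral ℚ α :=
  ⟨X^4 - C (3:ℚ), Polynomial.monic_X_pow_sub_C _ (by norm_num), by
    rw [eval₂_sub, eval₂_pow, eval₂_X, eval₂_C, sub_eq_zero,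
      show (algebraMap ℚ ℂ) 3 = (3:ℂ) by norm_num]
    exact halpha4⟩

private def RF : IntermediateField ℚ ℂ :=
  Subfield.toIntermediateField (Complex.ofRealHom.fieldRange)
    (fun x => ⟨(x : ℝ), by simp⟩)

private lemma mem_RF {z : ℂ} : z ∈ RF ↔ z.im = 0 := by
  constructor
  · rintro ⟨r, rfl⟩; simp
  · intro h; exact ⟨z.re, Complex.ext (by simp) (by simp [h])⟩

private lemma K1_real : ∀ z ∈ ℚ⟮α⟯, z.im = 0 := by
  intro z hz
  have : ℚ⟮α⟯ ≤ RF := by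
    rw [IntermediateField.adjoin_le_iff]
    rintro x rfl
    exact mem_RF.mpr (by simp)
  exact mem_RF.mp (this hz)

private lemma not_sq_q {n : ℕ} (h : ¬ IsSquare n) (q : ℚ) : q^2 ≠ (n:ℚ) := fun hq =>
  h (Rat.isSquare_natCast_iff.mp ⟨q, by rw [← hq]; ring⟩)

private lemma not_sq_nat {n : ℕ} (hn : n ≤ 8) (h : Nat.sqrt n * Nat.sqrt n ≠ n) :
    ¬ IsSquare n := by
  rintro ⟨r, hr⟩
  apply h
  subst hr
  rw [Nat.sqrt_eq r]

private lemma K1_sq_ne_two : ∀ z ∈ ℚ⟮α⟯, z^2 ≠ 2 := by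
  intro z hz h2
  set pb := IntermediateField.adjoin.powerBasis alpha_int with hpb
  obtain ⟨f, hfdeg, hf⟩ := pb.exists_eq_aeval (⟨z, hz⟩ : ℚ⟮α⟯)
  have hdim : pb.dim = 4 := by
    rw [hpb, IntermediateField.adjoin.powerBasis_dim, minpoly_alpha,
      Polynomial.natDegree_X_pow_sub_C]
  rw [hdim] at hfdeg
  have hzf : z = aeval α f := by
    have := congrArg (algebraMap ℚ⟮α⟯ ℂ) hf
    rwa [← Polynomial.aeval_algebraMap_apply, hpb,
      IntermediateField.adjoin.powerBasis_gen,
      IntermediateField.AdjoinSimple.algebraMap_gen] at this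
  have hsum := Polynomial.aeval_eq_sum_range' (hfdeg) (x := α)
  set a := f.coeff 0; set b := f.coeff 1; set c := f.coeff 2; set d := f.coeff 3
  have hzz : z = (a:ℂ) + b*α + c*α^2 + d*α^3 := by
    rw [hzf, hsum]
    simp [Finset.sum_range_succ, Rat.smul_def]
    try ring
  rw [hzz] at h2
  have lin : ∀ e0 e1 e2 e3 : ℚ,
      (e0:ℂ) + e1*α + e2*α^2 + e3*α^3 = 0 → e0 = 0 ∧ e1 = 0 ∧ e2 = 0 ∧ e3 = 0 := by
    intro e0 e1 e2 e3 he
    by_contra hne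
    set g : ℚ[X] := C e0 + C e1 * X + C e2 * X^2 + C e3 * X^3 with hg
    have hgc0 : g.coeff 0 = e0 := by simp [hg, coeff_one, coeff_X]
    have hgc1 : g.coeff 1 = e1 := by simp [hg, coeff_one, coeff_X]
    have hgc2 : g.coeff 2 = e2 := by simp [hg, coeff_one, coeff_X]
    have hgc3 : g.coeff 3 = e3 := by simp [hg, coeff_one, coeff_X]
    have hg0 : g ≠ 0 := by
      intro h0
      rw [h0] at hgc0 hgc1 hgc2 hgc3
      simp only [Polynomial.coeff_zero] at hgc0 hgc1 hgc2 hgc3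
      exact hne ⟨hgc0.symm, hgc1.symm, hgc2.symm, hgc3.symm⟩
    have hgev : aeval α g = 0 := by
      simp only [hg, map_add, map_mul, map_pow, aeval_X, aeval_C, eq_ratCast]
      exact he
    have hdle := minpoly.degree_le_of_ne_zero ℚ α hg0 hgev
    rw [minpoly_alpha, Polynomial.degree_X_pow_sub_C (by norm_num)] at hdle
    have hgle : g.degree ≤ 3 := by
      rw [hg]; compute_degree
    have : (4 : WithBot ℕ) ≤ 3 := le_trans hdle hgle
    norm_num at this
  have key : ((a^2 + 3*c^2 + 6*b*d - 2 : ℚ):ℂ)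
      + ((2*a*b + 6*c*d : ℚ):ℂ)*α + ((b^2 + 2*a*c + 3*d^2 : ℚ):ℂ)*α^2
      + ((2*a*d + 2*b*c : ℚ):ℂ)*α^3 = 0 := by
    push_cast
    linear_combination h2 - ((c:ℂ)^2 + 2*b*d + 2*c*d*α + (d:ℂ)^2*α^2) * halpha4
  obtain ⟨h1, hh2, h3, h4⟩ := lin _ _ _ _ key
  clear_value a b c d
  clear key lin hzz h2 hsum hzf hf hfdeg hdim hpb
  have hbd : c*(3*d^2 - b^2) = 0 := by linear_combination (d/2)*hh2 - (b/2)*h4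
  have hsq2 := not_sq_q (n := 2) (not_sq_nat (by norm_num) (by norm_num))
  have hsq3 := not_sq_q (n := 3) (not_sq_nat (by norm_num) (by norm_num))
  have hsq6 := not_sq_q (n := 6) (not_sq_nat (by norm_num) (by norm_num))
  rcases mul_eq_zero.mp hbd with hc | hbd2
  · rw [hc] at h3
    have h3' : b^2 + 3*d^2 = 0 := by linarith
    have hb : b = 0 := by nlinarith [sq_nonneg b, sq_nonneg d]
    have hd : d = 0 := by nlinarith [sq_nonneg b, sq_nonneg d]
    rw [hc, hb, hd] at h1
    exact hsq2 a (by push_cast; nlinarith [h1])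
  · by_cases hd : d = 0
    · have hb : b = 0 := by
        have : b^2 = 0 := by rw [hd] at hbd2; nlinarith [hbd2]
        exact pow_eq_zero_iff (by norm_num) |>.mp this
      rw [hb, hd] at h3
      have hac : a * c = 0 := by linarith
      rcases mul_eq_zero.mp hac with ha | hc
      · rw [ha, hb, hd] at h1
        exact hsq6 (3*c) (by push_cast; nlinarith [h1])
      · rw [hc, hb, hd] at h1
        exact hsq2 a (by push_cast; nlinarith [h1])
    · refine hsq3 (b/d) ?_
      push_cast
      field_simp
      nlinarith [hbd2]

-- K1 and its degree
private def K1 : IntermediateField ℚ ℂ := ℚ⟮α⟯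

private lemma rank1 : Module.finrank ℚ K1 = 4 := by
  rw [K1, IntermediateField.adjoin.finrank alpha_int, minpoly_alpha,
    Polynomial.natDegree_X_pow_sub_C]

-- i over K1
private lemma I_int : IsIntegral K1 Complex.I :=
  ⟨X^2 - C (-1 : K1), Polynomial.monic_X_pow_sub_C _ (by norm_num), by
    rw [eval₂_sub, eval₂_pow, eval₂_X, eval₂_C, sub_eq_zero, map_neg, map_one, Complex.I_sq]⟩

private lemma K1_sq_ne_neg_one : ∀ b : K1, b^2 ≠ -1 := by
  intro b hb
  have hb' : ((b:ℂ))^2 = -1 := by exact_mod_cast congrArg (algebraMap K1 ℂ) hb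
  have him : (b:ℂ).im = 0 := K1_real _ b.2
  have := congrArg Complex.re hb'
  rw [pow_two, Complex.mul_re, him] at this
  simp at this
  nlinarith [this, sq_nonneg (b:ℂ).re]

private lemma minpoly_I : minpoly K1 Complex.I = X^2 - C (-1 : K1) := by
  refine (minpoly.eq_of_irreducible_of_monic
    (X_pow_sub_C_irreducible_of_prime Nat.prime_two K1_sq_ne_neg_one) ?_
    (Polynomial.monic_X_pow_sub_C _ (by norm_num))).symm
  simp only [map_sub, map_pow, aeval_X, aeval_C]
  rw [sub_eq_zero, map_neg, map_one, Complex.I_sq]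

private def K2 : IntermediateField K1 ℂ := IntermediateField.adjoin K1 {Complex.I}

private lemma rank2 : Module.finrank K1 K2 = 2 := by
  rw [K2, IntermediateField.adjoin.finrank I_int, minpoly_I,
    Polynomial.natDegree_X_pow_sub_C]

private lemma K2_decomp : ∀ z ∈ K2, ∃ x y : ℂ, x ∈ K1 ∧ y ∈ K1 ∧ z = x + y * Complex.I := by
  intro z hz
  set pb := IntermediateField.adjoin.powerBasis I_int with hpb
  obtain ⟨f, hfdeg, hf⟩ := pb.exists_eq_aeval (⟨z, hz⟩ : K2)
  have hdim : pb.dim = 2 := by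
    rw [hpb, IntermediateField.adjoin.powerBasis_dim, minpoly_I,
      Polynomial.natDegree_X_pow_sub_C]
  rw [hdim] at hfdeg
  have h0 := congrArg (algebraMap (↥(IntermediateField.adjoin K1 {Complex.I})) ℂ) hf
  rw [← Polynomial.aeval_algebraMap_apply, hpb,
    IntermediateField.adjoin.powerBasis_gen,
    IntermediateField.AdjoinSimple.algebraMap_gen] at h0
  have hsum := Polynomial.aeval_eq_sum_range' (R := ↥K1) hfdeg (x := Complex.I)
  rw [hsum] at h0
  refine ⟨algebraMap K1 ℂ (f.coeff 0), algebraMap K1 ℂ (f.coeff 1),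
    (f.coeff 0).2, (f.coeff 1).2, ?_⟩
  calc z = algebraMap (↥(IntermediateField.adjoin K1 {Complex.I})) ℂ ⟨z, hz⟩ := rfl
    _ = ∑ i ∈ Finset.range 2, f.coeff i • Complex.I ^ i := h0
    _ = algebraMap K1 ℂ (f.coeff 0) + algebraMap K1 ℂ (f.coeff 1) * Complex.I := by
        simp [Finset.sum_range_succ, Algebra.smul_def]

private lemma K2_sq_ne_two : ∀ b : K2, b^2 ≠ 2 := by
  intro b hb
  have hb' : ((b:ℂ))^2 = 2 := by
    have h := congrArg (algebraMap K2 ℂ) hb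
    rwa [map_pow, map_ofNat] at h
  obtain ⟨x, y, hx, hy, hxy⟩ := K2_decomp (b:ℂ) b.2
  have hxim : x.im = 0 := K1_real _ hx
  have hyim : y.im = 0 := K1_real _ hy
  have hb2 : (x + y * Complex.I)^2 = 2 := by rw [← hxy]; exact hb'
  have hre := congrArg Complex.re hb2
  have him := congrArg Complex.im hb2
  rw [pow_two] at hre him
  simp only [Complex.mul_re, Complex.mul_im, Complex.add_re, Complex.add_im,
    Complex.I_re, Complex.I_im, Complex.re_ofNat, Complex.im_ofNat,
    mul_zero, mul_one, zero_mul, add_zero, zero_add, sub_zero, hxim, hyim] at hre him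
  have him' : x.re * y.re = 0 := by nlinarith [him]
  rcases mul_eq_zero.mp him' with h | h
  · nlinarith [hre, sq_nonneg y.re, sq_nonneg x.re]
  · have hyzero : y = 0 := Complex.ext h hyim
    have hxb : x = (b:ℂ) := by rw [hxy, hyzero]; ring
    exact K1_sq_ne_two (b:ℂ) (hxb ▸ hx) hb'

private lemma sqrt2_int : IsIntegral K2 ((Real.sqrt 2 : ℝ) : ℂ) :=
  ⟨X^2 - C (2 : K2), Polynomial.monic_X_pow_sub_C _ (by norm_num), by
    rw [eval₂_sub, eval₂_pow, eval₂_X, eval₂_C, sub_eq_zero, map_ofNat]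
    exact sqrt2_sq⟩

private lemma minpoly_sqrt2 : minpoly K2 ((Real.sqrt 2 : ℝ) : ℂ) = X^2 - C (2 : K2) := by
  refine (minpoly.eq_of_irreducible_of_monic
    (X_pow_sub_C_irreducible_of_prime Nat.prime_two K2_sq_ne_two) ?_
    (Polynomial.monic_X_pow_sub_C _ (by norm_num))).symm
  simp only [map_sub, map_pow, aeval_X, aeval_C]
  rw [sub_eq_zero, map_ofNat]
  exact sqrt2_sq

private def K3 : IntermediateField K2 ℂ := IntermediateField.adjoin K2 {((Real.sqrt 2 : ℝ) : ℂ)}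

private lemma rank3 : Module.finrank K2 K3 = 2 := by
  rw [K3, IntermediateField.adjoin.finrank sqrt2_int, minpoly_sqrt2,
    Polynomial.natDegree_X_pow_sub_C]

set_option synthInstance.maxHeartbeats 1000000 in
set_option maxHeartbeats 1000000 in
private lemma rank16 : Module.finrank ℚ K3 = 16 := by
  have t1 := Module.finrank_mul_finrank ℚ (↥K1) (↥K2)
  have t2 := Module.finrank_mul_finrank ℚ (↥K2) (↥K3)
  rw [← t2, ← t1, rank1, rank2, rank3]

private lemma target_eq :
    IntermediateField.adjoin ℚ
      ({(Real.sqrt 2 : ℂ), (((3 : ℝ) ^ ((1 : ℝ) / 4) : ℝ) : ℂ), Complex.I} : Set ℂ) =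
    IntermediateField.restrictScalars ℚ (IntermediateField.restrictScalars (↥K1) K3) := by
  rw [K3, K2, IntermediateField.adjoin_adjoin_left, K1]
  erw [IntermediateField.adjoin_adjoin_left]
  congr 1
  ext x
  simp
  tauto

end StmtAux

theorem stmt_2 :
    IsGalois ℚ (IntermediateField.adjoin ℚ
      ({(Real.sqrt 2 : ℂ), (((3 : ℝ) ^ ((1 : ℝ) / 4) : ℝ) : ℂ), Complex.I} : Set ℂ)) ∧
    Module.finrank ℚ (IntermediateField.adjoin ℚ
      ({(Real.sqrt 2 : ℂ), (((3 : ℝ) ^ ((1 : ℝ) / 4) : ℝ) : ℂ), Complex.I} : Set ℂ)) = 16 := by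
  constructor
  · set T := IntermediateField.adjoin ℚ
      ({(Real.sqrt 2 : ℂ), (((3 : ℝ) ^ ((1 : ℝ) / 4) : ℝ) : ℂ), Complex.I} : Set ℂ) with hT
    set p : ℚ[X] := (X^2 - C 2) * ((X^4 - C 3) * (X^2 - C (-1))) with hp
    have hpm : p.Monic :=
      (Polynomial.monic_X_pow_sub_C _ (by norm_num)).mul
        ((Polynomial.monic_X_pow_sub_C _ (by norm_num)).mul
          (Polynomial.monic_X_pow_sub_C _ (by norm_num)))
    have hp0 : p ≠ 0 := hpm.ne_zero
    have h2T : ((Real.sqrt 2 : ℝ) : ℂ) ∈ T := IntermediateField.subset_adjoin _ _ (by simp)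
    have haT : (((3 : ℝ) ^ ((1 : ℝ) / 4) : ℝ) : ℂ) ∈ T :=
      IntermediateField.subset_adjoin _ _ (by simp)
    have hIT : Complex.I ∈ T := IntermediateField.subset_adjoin _ _ (by simp)
    have hproots : IntermediateField.adjoin ℚ (p.rootSet ℂ) = T := by
      apply le_antisymm
      · rw [IntermediateField.adjoin_le_iff]
        intro x hx
        rw [Polynomial.mem_rootSet] at hx
        obtain ⟨-, hx⟩ := hx
        have hx' : (x^2 - 2) * ((x^4 - 3) * (x^2 + 1)) = 0 := by
          simpa only [hp, map_mul, map_sub, map_pow, aeval_X, aeval_C, map_add, map_ofNat,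
            map_neg, map_one, sub_neg_eq_add] using hx
        rcases mul_eq_zero.mp hx' with h | h
        · have hfac : (x - ((Real.sqrt 2 : ℝ) : ℂ)) * (x + ((Real.sqrt 2 : ℝ) : ℂ)) = 0 := by
            linear_combination h - sqrt2_sq
          rcases mul_eq_zero.mp hfac with h' | h'
          · rw [sub_eq_zero] at h'
            exact h' ▸ h2T
          · have h'' : x = -((Real.sqrt 2 : ℝ) : ℂ) := eq_neg_of_add_eq_zero_left h'
            exact h'' ▸ T.neg_mem h2T
        · rcases mul_eq_zero.mp h with h | h
          · have hfac : (x - (((3 : ℝ) ^ ((1 : ℝ) / 4) : ℝ) : ℂ)) *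
                (x + (((3 : ℝ) ^ ((1 : ℝ) / 4) : ℝ) : ℂ)) *
                ((x - Complex.I * (((3 : ℝ) ^ ((1 : ℝ) / 4) : ℝ) : ℂ)) *
                 (x + Complex.I * (((3 : ℝ) ^ ((1 : ℝ) / 4) : ℝ) : ℂ))) = 0 := by
              linear_combination h - halpha4 +
                ((((3 : ℝ) ^ ((1 : ℝ) / 4) : ℝ) : ℂ)^4 -
                  (((3 : ℝ) ^ ((1 : ℝ) / 4) : ℝ) : ℂ)^2 * x^2) * Complex.I_sq
            rcases mul_eq_zero.mp hfac with h' | h'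
            · rcases mul_eq_zero.mp h' with h'' | h''
              · rw [sub_eq_zero] at h''
                exact h'' ▸ haT
              · have h3 : x = -(((3 : ℝ) ^ ((1 : ℝ) / 4) : ℝ) : ℂ) :=
                  eq_neg_of_add_eq_zero_left h''
                exact h3 ▸ T.neg_mem haT
            · rcases mul_eq_zero.mp h' with h'' | h''
              · rw [sub_eq_zero] at h''
                exact h'' ▸ T.mul_mem hIT haT
              · have h3 : x = -(Complex.I * (((3 : ℝ) ^ ((1 : ℝ) / 4) : ℝ) : ℂ)) :=
                  eq_neg_of_add_eq_zero_left h''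
                exact h3 ▸ T.neg_mem (T.mul_mem hIT haT)
          · have hfac : (x - Complex.I) * (x + Complex.I) = 0 := by
              linear_combination h - Complex.I_sq
            rcases mul_eq_zero.mp hfac with h' | h'
            · rw [sub_eq_zero] at h'
              exact h' ▸ hIT
            · have h'' : x = -Complex.I := eq_neg_of_add_eq_zero_left h'
              exact h'' ▸ T.neg_mem hIT
      · rw [hT, IntermediateField.adjoin_le_iff]
        rintro x hx
        simp only [Set.mem_insert_iff, Set.mem_singleton_iff] at hx
        rcases hx with rfl | rfl | rfl
        · refine IntermediateField.subset_adjoin _ _ (Polynomial.mem_rootSet.mpr ⟨hp0, ?_⟩)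
          simp only [hp, map_mul, map_sub, map_pow, aeval_X, aeval_C, map_add, map_ofNat,
            map_neg, map_one, sub_neg_eq_add]
          rw [sqrt2_sq]
          ring
        · refine IntermediateField.subset_adjoin _ _ (Polynomial.mem_rootSet.mpr ⟨hp0, ?_⟩)
          simp only [hp, map_mul, map_sub, map_pow, aeval_X, aeval_C, map_add, map_ofNat,
            map_neg, map_one, sub_neg_eq_add]
          rw [halpha4]
          ring
        · refine IntermediateField.subset_adjoin _ _ (Polynomial.mem_rootSet.mpr ⟨hp0, ?_⟩)
          simp only [hp, map_mul, map_sub, map_pow, aeval_X, aeval_C, map_add, map_ofNat,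
            map_neg, map_one, sub_neg_eq_add]
          rw [Complex.I_sq]
          ring
    have hsp := IntermediateField.adjoin_rootSet_isSplittingField
      (L := ℂ) (IsAlgClosed.splits (p.map (algebraMap ℚ ℂ)))
    rw [hproots] at hsp
    haveI : IsSplittingField ℚ T p := hsp
    haveI : FiniteDimensional ℚ T := Polynomial.IsSplittingField.finiteDimensional T p
    haveI : Normal ℚ T := Normal.of_isSplittingField p
    exact ⟨⟩
  · rw [target_eq]
    exact rank16
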